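/- Let 0 < ε < 1/2 and let λ : [0,1] → ℝ satisfy ‖λ‖_{1/2} ≤ 4 + 2ε and λ(1) = 0. Let x < λ(0) be a real number that is captured by λ at time 1, i.e. the real solution g_t(x) of ∂_t g_t(x) = 2/(g_t(x) − λ(t)), g_0(x) = x, exists for all t ∈ [0,1) and g_t(x) → 0 as t → 1⁻. Define x_s := e^{s/2} g_{1−e^{−s}}(x) for s ∈ [0,∞) and L := 2 + ε − √(ε(ε+4)). Then there exists a finite time S₀ such that x_s ∈ [L, L + 5√ε] for all s ≥ S₀. -/

import Mathlib

open Set Filter Topology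

noncomputable section

/-- `HalfLipOn lam S C` : `lam` is Lip(1/2) on `S` with constant `C`. -/
def HalfLipOn (lam : ℝ → ℝ) (S : Set ℝ) (C : ℝ) : Prop :=
  ∀ s ∈ S, ∀ t ∈ S, |lam t - lam s| ≤ C * Real.sqrt |t - s|

/-- `RealLoewnerSolOn lam x g s` means that the real-valued function `g` solves the chordal
Loewner equation `∂ₜ g t = 2 / (g t - lam t)`, `g 0 = x`, on the time interval `[0, s)`
(one-sided derivative at `0`). -/
def RealLoewnerSolOn (lam : ℝ → ℝ) (x : ℝ) (g : ℝ → ℝ) (s : ℝ) : Prop :=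
  g 0 = x ∧ ∀ t ∈ Set.Ico (0 : ℝ) s,
    g t ≠ lam t ∧ HasDerivWithinAt g (2 / (g t - lam t)) (Set.Ici 0) t


lemma lin_decay (f f' : ℝ → ℝ) (s0 δ : ℝ)
    (hderiv : ∀ s ∈ Set.Ici s0, HasDerivAt f (f' s) s)
    (hb : ∀ s ∈ Set.Ici s0, f' s ≤ -δ) :
    ∀ s ∈ Set.Ici s0, f s ≤ f s0 - δ * (s - s0) := by
  intro s hs
  have hF : ∀ u ∈ Set.Ici s0, HasDerivAt (fun v => f v + δ * v) (f' u + δ) u := by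
    intro u hu
    exact (hderiv u hu).add (by simpa using (hasDerivAt_id u).const_mul δ)
  have hanti : AntitoneOn (fun v => f v + δ * v) (Set.Ici s0) := by
    apply antitoneOn_of_deriv_nonpos (convex_Ici s0)
    · exact fun u hu => ((hF u hu).continuousAt).continuousWithinAt
    · intro u hu
      rw [interior_Ici] at hu
      exact ((hF u (Set.mem_Ici.2 hu.le)).differentiableAt).differentiableWithinAt
    · intro u hu
      rw [interior_Ici] at hu
      rw [(hF u (Set.mem_Ici.2 hu.le)).deriv]
      linarith [hb u (Set.mem_Ici.2 hu.le)]
  have h := hanti (show s0 ∈ Set.Ici s0 from le_refl s0) hs hs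
  dsimp only at h
  linarith

lemma no_upcross (f f' : ℝ → ℝ) (s0 a : ℝ)
    (hderiv : ∀ s ∈ Set.Ici s0, HasDerivAt f (f' s) s)
    (hneg : ∀ s ∈ Set.Ici s0, f s = a → f' s < 0)
    (h0 : f s0 ≤ a) : ∀ s ∈ Set.Ici s0, f s ≤ a := by
  intro s1 hs1
  by_contra hgt
  push_neg at hgt
  have hs01 : s0 < s1 := by
    rcases eq_or_lt_of_le (Set.mem_Ici.1 hs1) with h | h
    · exfalso; rw [← h] at hgt; linarith
    · exact h
  set K := {u : ℝ | u ∈ Set.Icc s0 s1 ∧ f u ≤ a} with hK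
  have hs0K : s0 ∈ K := ⟨⟨le_refl _, hs01.le⟩, h0⟩
  have hKbdd : BddAbove K := ⟨s1, fun u hu => hu.1.2⟩
  set T := sSup K with hT
  have hT1 : s0 ≤ T := le_csSup hKbdd hs0K
  have hT2 : T ≤ s1 := csSup_le ⟨s0, hs0K⟩ fun u hu => hu.1.2
  have hfT : f T ≤ a := by
    have hcw : ContinuousWithinAt f K T :=
      ((hderiv T hT1).continuousAt).continuousWithinAt
    have hmem : T ∈ closure K := csSup_mem_closure ⟨s0, hs0K⟩ hKbdd
    have h1 : f T ∈ closure (f '' K) := hcw.mem_closure_image hmem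
    have h2 : closure (f '' K) ⊆ Set.Iic a := by
      apply closure_minimal _ isClosed_Iic
      rintro _ ⟨u, hu, rfl⟩
      exact hu.2
    exact h2 h1
  have hTs1 : T < s1 := lt_of_le_of_ne hT2 (fun h => by rw [h] at hfT; linarith)
  have habove : ∀ u, T < u → u < s1 → a < f u := by
    intro u h1 h2
    by_contra h
    push_neg at h
    have hmem : u ∈ K := ⟨⟨hT1.trans h1.le, h2.le⟩, h⟩
    exact absurd (le_csSup hKbdd hmem) (not_le.2 h1)
  have hfTa : f T = a := by
    refine le_antisymm hfT ?_
    have htend : Tendsto f (𝓝[>] T) (𝓝 (f T)) :=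
      ((hderiv T hT1).continuousAt).continuousWithinAt
    refine ge_of_tendsto htend ?_
    filter_upwards [Ioo_mem_nhdsGT_of_mem (Set.mem_Ico.2 ⟨le_refl T, hTs1⟩)] with u hu
    exact (habove u hu.1 hu.2).le
  have hf' : f' T < 0 := hneg T hT1 hfTa
  have hslope : Tendsto (slope f T) (𝓝[>] T) (𝓝 (f' T)) := by
    have h := hasDerivAt_iff_tendsto_slope.1 (hderiv T hT1)
    exact h.mono_left (nhdsWithin_mono T fun u hu => ne_of_gt hu)
  have hev : {u | slope f T u < 0} ∈ 𝓝[>] T := hslope (Iio_mem_nhds hf')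
  have hev2 : Set.Ioo T s1 ∈ 𝓝[>] T := Ioo_mem_nhdsGT_of_mem (Set.mem_Ico.2 ⟨le_refl T, hTs1⟩)
  obtain ⟨u, hu1, hu2⟩ := Filter.nonempty_of_mem (Filter.inter_mem hev hev2)
  rw [Set.mem_setOf_eq, slope_def_field] at hu1
  have hut : 0 < u - T := sub_pos.2 hu2.1
  have hlt : f u - f T < 0 := by
    by_contra hge
    push_neg at hge
    exact absurd hu1 (not_lt.2 (div_nonneg hge hut.le))
  have := habove u hu2.1 hu2.2
  rw [hfTa] at hlt
  linarith

lemma decay (f f' : ℝ → ℝ) (s0 a δ : ℝ) (hδ : 0 < δ)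
    (hderiv : ∀ s ∈ Set.Ici s0, HasDerivAt f (f' s) s)
    (hb : ∀ s ∈ Set.Ici s0, f s ≤ a → f' s ≤ -δ)
    (h0 : f s0 ≤ a) : ∀ s ∈ Set.Ici s0, f s ≤ a - δ * (s - s0) := by
  have hle : ∀ s ∈ Set.Ici s0, f s ≤ a :=
    no_upcross f f' s0 a hderiv
      (fun s hs hfa => lt_of_le_of_lt (hb s hs hfa.le) (by linarith)) h0
  have h := lin_decay f f' s0 δ hderiv (fun s hs => hb s hs (hle s hs))
  intro s hs
  linarith [h s hs, h0]

set_option maxHeartbeats 1000000 in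
/-- (Lemma `interval` of the paper.)  If `‖lam‖_{1/2} ≤ 4 + 2ε`, `lam 1 = 0`,
and `x < lam 0` is captured by `lam` at time `1`, then the time-changed flow
`x_s = e^{s/2} g_{1-e^{-s}}(x)` eventually stays in the interval
`[L, L + 5√ε]`, where `L = 2 + ε - √(ε(ε+4))`. -/
theorem captured_point_eventually_in_interval
    (ε : ℝ) (hε0 : 0 < ε) (hε : ε < 1 / 2)
    (lam : ℝ → ℝ) (hLip : HalfLipOn lam (Set.Icc 0 1) (4 + 2 * ε)) (hlam1 : lam 1 = 0)
    (x : ℝ) (hx : x < lam 0)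
    (g : ℝ → ℝ) (hg : RealLoewnerSolOn lam x g 1)
    (hcap : Tendsto g (nhdsWithin 1 (Set.Iio 1)) (nhds 0)) :
    ∃ S₀ : ℝ, ∀ s : ℝ, S₀ ≤ s →
      Real.exp (s / 2) * g (1 - Real.exp (-s)) ∈
        Set.Icc (2 + ε - Real.sqrt (ε * (ε + 4)))
          (2 + ε - Real.sqrt (ε * (ε + 4)) + 5 * Real.sqrt ε) := by
  obtain ⟨hg0, hgode⟩ := hg
  set C : ℝ := 4 + 2 * ε with hCdef
  set r : ℝ := Real.sqrt (ε * (ε + 4)) with hrdef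
  set e : ℝ := Real.sqrt ε with hedef
  have hr0 : 0 ≤ r := Real.sqrt_nonneg _
  have he0 : 0 ≤ e := Real.sqrt_nonneg _
  have hr2 : r ^ 2 = ε * (ε + 4) := Real.sq_sqrt (by positivity)
  have he2 : e ^ 2 = ε := Real.sq_sqrt hε0.le
  set L : ℝ := 2 + ε - r with hLdef
  set M : ℝ := L + 5 * e with hMdef
  clear_value C r e L M
  have hCpos : 0 < C := by rw [hCdef]; linarith
  have hL0 : 0 < L := by rw [hLdef]; nlinarith [hr0, hr2, hε0]
  have hLC2 : L ≤ C / 2 := by rw [hLdef, hCdef]; linarith [hr0]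
  have hMC2 : C / 2 ≤ M := by
    have h5 : r ≤ 5 * e := by nlinarith [hr0, he0, hr2, he2, hε0, hε]
    rw [hMdef, hLdef, hCdef]; linarith
  have herr : (e * r) ^ 2 = ε ^ 2 * (ε + 4) := by rw [mul_pow, he2, hr2]; ring
  have her : 2 * (e * r) < 5 * ε := by
    nlinarith [herr, mul_nonneg he0 hr0, hε0, hε]
  have hPM : 0 < M ^ 2 - C * M + 4 := by
    rw [hMdef, hLdef, hCdef]; nlinarith [her, he2, hr2]
  -- continuity of lam
  have hlamc : ContinuousOn lam (Set.Icc 0 1) := by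
    intro t0 ht0
    rw [ContinuousWithinAt, tendsto_iff_dist_tendsto_zero]
    have hb : Tendsto (fun u => C * Real.sqrt |u - t0|) (𝓝[Set.Icc (0:ℝ) 1] t0) (𝓝 0) := by
      have hc : Continuous (fun u : ℝ => C * Real.sqrt |u - t0|) :=
        continuous_const.mul (Real.continuous_sqrt.comp ((continuous_id.sub continuous_const).abs))
      have h0 : C * Real.sqrt |t0 - t0| = 0 := by simp
      have h1 := hc.tendsto t0
      rw [h0] at h1
      exact h1.mono_left nhdsWithin_le_nhds
    apply squeeze_zero' (Filter.Eventually.of_forall fun u => dist_nonneg) ?_ hb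
    filter_upwards [self_mem_nhdsWithin] with u hu
    rw [Real.dist_eq]
    exact hLip t0 ht0 u hu
  -- continuity of g
  have hgc : ContinuousOn g (Set.Ico 0 1) := fun t ht =>
    ((hgode t ht).2.continuousWithinAt).mono Set.Ico_subset_Ici_self
  -- g < lam on [0,1)
  have hgl : ∀ t ∈ Set.Ico (0:ℝ) 1, g t < lam t := by
    intro t ht
    rcases lt_or_ge (g t) (lam t) with h | h
    · exact h
    exfalso
    have hne := (hgode t ht).1
    have hlt : lam t < g t := lt_of_le_of_ne h (fun heq => hne heq.symm)
    have hcont : ContinuousOn (fun u => g u - lam u) (Set.Icc 0 t) := by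
      apply ContinuousOn.sub
      · exact hgc.mono (fun u hu => ⟨hu.1, lt_of_le_of_lt hu.2 ht.2⟩)
      · exact hlamc.mono (fun u hu => ⟨hu.1, hu.2.trans ht.2.le⟩)
    have h0 : g 0 - lam 0 < 0 := by rw [hg0]; linarith
    have hIVT := intermediate_value_Icc ht.1 hcont
    have h00 : (0:ℝ) ∈ Set.Icc (g 0 - lam 0) (g t - lam t) := ⟨h0.le, by linarith⟩
    obtain ⟨u, hu, huv⟩ := hIVT h00
    have := (hgode u ⟨hu.1, lt_of_le_of_lt hu.2 ht.2⟩).1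
    exact this (by dsimp at huv; linarith)
  -- g strictly decreasing
  have hanti : StrictAntiOn g (Set.Ico 0 1) := by
    apply strictAntiOn_of_deriv_neg (convex_Ico 0 1) hgc
    intro t ht
    rw [interior_Ico] at ht
    have htI : t ∈ Set.Ico (0:ℝ) 1 := ⟨ht.1.le, ht.2⟩
    have hd : HasDerivAt g (2 / (g t - lam t)) t :=
      (hgode t htI).2.hasDerivAt (Ici_mem_nhds ht.1)
    rw [hd.deriv]
    exact div_neg_of_pos_of_neg (by norm_num) (by linarith [hgl t htI])
  -- g positive
  have hgpos : ∀ t ∈ Set.Ico (0:ℝ) 1, 0 < g t := by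
    intro t ht
    by_contra h
    push_neg at h
    have ht' : ((t+1)/2) ∈ Set.Ico (0:ℝ) 1 := ⟨by linarith [ht.1], by linarith [ht.2]⟩
    have htt' : t < (t+1)/2 := by linarith [ht.2]
    have h1 : g ((t+1)/2) < g t := hanti ht ht' htt'
    have h2 : ∀ᶠ u in 𝓝[<] (1:ℝ), g u ≤ g ((t+1)/2) := by
      filter_upwards [Ioo_mem_nhdsLT_of_mem (Set.mem_Ioc.2 ⟨ht'.2, le_refl 1⟩)] with u hu
      exact (hanti ht' ⟨by linarith [ht'.1, hu.1], hu.2⟩ hu.1).le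
    have := le_of_tendsto hcap h2
    linarith
  -- the time-changed flow
  set X : ℝ → ℝ := fun s => Real.exp (s / 2) * g (1 - Real.exp (-s)) with hXdef
  set lamS : ℝ → ℝ := fun s => Real.exp (s / 2) * lam (1 - Real.exp (-s)) with hlamSdef
  have hXapp : ∀ s : ℝ, X s = Real.exp (s / 2) * g (1 - Real.exp (-s)) := fun s => by
    rw [hXdef]
  have hlamSapp : ∀ s : ℝ, lamS s = Real.exp (s / 2) * lam (1 - Real.exp (-s)) := fun s => by
    rw [hlamSdef]
  have htmem : ∀ s : ℝ, 0 ≤ s → (1 - Real.exp (-s)) ∈ Set.Ico (0:ℝ) 1 := by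
    intro s hs
    have h1 : Real.exp (-s) ≤ 1 := by
      rw [← Real.exp_zero]; exact Real.exp_le_exp.2 (by linarith)
    exact ⟨by linarith, by linarith [Real.exp_pos (-s)]⟩
  have hXpos : ∀ s : ℝ, 0 ≤ s → 0 < X s := fun s hs => by
    rw [hXapp]; exact mul_pos (Real.exp_pos _) (hgpos _ (htmem s hs))
  have hXlamS : ∀ s : ℝ, 0 ≤ s → X s < lamS s := fun s hs => by
    rw [hXapp, hlamSapp]
    exact (mul_lt_mul_iff_right₀ (Real.exp_pos _)).2 (hgl _ (htmem s hs))
  have hlamSC : ∀ s : ℝ, 0 ≤ s → lamS s ≤ C := by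
    intro s hs
    have ht := htmem s hs
    have hlip := hLip 1 ⟨zero_le_one, le_refl 1⟩ (1 - Real.exp (-s)) ⟨ht.1, ht.2.le⟩
    rw [hlam1, sub_zero] at hlip
    have habs : |1 - Real.exp (-s) - 1| = Real.exp (-s) := by
      rw [show (1 : ℝ) - Real.exp (-s) - 1 = -Real.exp (-s) by ring, abs_neg,
        abs_of_pos (Real.exp_pos _)]
    rw [habs] at hlip
    have hsq2 : Real.exp (-s/2) ^ 2 = Real.exp (-s) := by
      rw [sq, ← Real.exp_add]; ring_nf
    have hsq : Real.sqrt (Real.exp (-s)) = Real.exp (-s/2) := by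
      rw [← hsq2, Real.sqrt_sq (Real.exp_pos _).le]
    rw [hsq] at hlip
    have h1 : lam (1 - Real.exp (-s)) ≤ C * Real.exp (-s/2) :=
      le_trans (le_abs_self _) hlip
    calc lamS s = Real.exp (s/2) * lam (1 - Real.exp (-s)) := hlamSapp s
      _ ≤ Real.exp (s/2) * (C * Real.exp (-s/2)) := by
          exact mul_le_mul_of_nonneg_left h1 (Real.exp_pos _).le
      _ = C * (Real.exp (s/2) * Real.exp (-s/2)) := by ring
      _ = C := by
          rw [← Real.exp_add, show s / 2 + -s / 2 = 0 by ring, Real.exp_zero, mul_one]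
  have hCX : ∀ s : ℝ, 0 ≤ s → 0 < C - X s := fun s hs => by
    linarith [hXlamS s hs, hlamSC s hs]
  -- derivative of X
  have hderivX : ∀ s : ℝ, 0 < s → HasDerivAt X (X s / 2 - 2 / (lamS s - X s)) s := by
    intro s hs
    have hexps : Real.exp (-s) < 1 := by
      rw [← Real.exp_zero]; exact Real.exp_lt_exp.2 (by linarith)
    have ht0 : (0:ℝ) < 1 - Real.exp (-s) := by linarith
    have htI : (1 - Real.exp (-s)) ∈ Set.Ico (0:ℝ) 1 :=
      ⟨ht0.le, by linarith [Real.exp_pos (-s)]⟩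
    obtain ⟨hne, hdg⟩ := hgode _ htI
    have hgd : HasDerivAt g (2 / (g (1 - Real.exp (-s)) - lam (1 - Real.exp (-s))))
        (1 - Real.exp (-s)) := hdg.hasDerivAt (Ici_mem_nhds ht0)
    have hu : HasDerivAt (fun v : ℝ => 1 - Real.exp (-v)) (Real.exp (-s)) s := by
      have h1 : HasDerivAt (fun v : ℝ => Real.exp (-v)) (-Real.exp (-s)) s := by
        simpa [Function.comp_def] using (Real.hasDerivAt_exp (-s)).comp s ((hasDerivAt_id s).neg)
      simpa using h1.const_sub (1:ℝ)
    have hcomp : HasDerivAt (fun v : ℝ => g (1 - Real.exp (-v)))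
        (2 / (g (1 - Real.exp (-s)) - lam (1 - Real.exp (-s))) * Real.exp (-s)) s := by
      simpa [Function.comp_def] using hgd.comp s hu
    have hE : HasDerivAt (fun v : ℝ => Real.exp (v/2)) (Real.exp (s/2) * (1/2)) s := by
      simpa [Function.comp_def] using (Real.hasDerivAt_exp (s/2)).comp s ((hasDerivAt_id s).div_const 2)
    have hmul := hE.mul hcomp
    have hglam : g (1 - Real.exp (-s)) - lam (1 - Real.exp (-s)) ≠ 0 := sub_ne_zero.2 hne
    have hE0 : Real.exp (s/2) ≠ 0 := (Real.exp_pos _).ne'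
    have hFdef : Real.exp (-s) = (Real.exp (s/2))⁻¹ * (Real.exp (s/2))⁻¹ := by
      rw [← mul_inv, ← Real.exp_add, ← Real.exp_neg]
      norm_num
    have hne2 : Real.exp (s/2) * lam (1 - Real.exp (-s)) - Real.exp (s/2) * g (1 - Real.exp (-s)) ≠ 0 := by
      rw [← mul_sub]
      exact mul_ne_zero hE0 (sub_ne_zero.2 (fun hh => hne hh.symm))
    have heq : X s / 2 - 2 / (lamS s - X s) =
        Real.exp (s / 2) * (1 / 2) * g (1 - Real.exp (-s)) +
          Real.exp (s / 2) *
            (2 / (g (1 - Real.exp (-s)) - lam (1 - Real.exp (-s))) * Real.exp (-s)) := by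
      rw [hXapp, hlamSapp]
      set G := g (1 - Real.exp (-s)) with hG
      set Lm := lam (1 - Real.exp (-s)) with hLm
      rw [hFdef]
      field_simp
      ring
    rw [heq]
    exact hmul
  -- pointwise comparison bound
  have hD1 : ∀ s : ℝ, 0 ≤ s →
      X s / 2 - 2 / (lamS s - X s) ≤ X s / 2 - 2 / (C - X s) := by
    intro s hs
    have h1 : 0 < lamS s - X s := sub_pos.2 (hXlamS s hs)
    have h2 : lamS s - X s ≤ C - X s := by linarith [hlamSC s hs]
    have h3 : 2 / (C - X s) ≤ 2 / (lamS s - X s) := by gcongr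
    linarith
  -- lower bound : L ≤ X s for all s > 0
  have hlow : ∀ s : ℝ, 0 < s → L ≤ X s := by
    intro s0 hs0
    by_contra h
    push_neg at h
    have ha0 : 0 < X s0 := hXpos s0 hs0.le
    set a := X s0 with hadef
    clear_value a
    have hPa : 0 < a ^ 2 - C * a + 4 := by
      rw [hCdef]
      nlinarith [hr0, hr2, hLdef, h, ha0,
        mul_pos (show (0:ℝ) < 2 + ε - a - r by rw [hLdef] at h; linarith)
          (show (0:ℝ) < 2 + ε - a + r by rw [hLdef] at h; linarith)]
    set δ := (a ^ 2 - C * a + 4) / (2 * C) with hδdef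
    clear_value δ
    have h2C : (0:ℝ) < 2 * C := by linarith
    have hδ : 0 < δ := hδdef ▸ div_pos hPa h2C
    have hδC : δ * (2 * C) = a ^ 2 - C * a + 4 := by
      rw [hδdef]; field_simp
    have hbnd : ∀ u ∈ Set.Ici s0, X u ≤ a → X u / 2 - 2 / (lamS u - X u) ≤ -δ := by
      intro u hu hXa
      have hu0 : (0:ℝ) ≤ u := le_trans hs0.le hu
      have h1 := hD1 u hu0
      have h2 := hCX u hu0
      have h3 := hXpos u hu0
      have hCaX : 0 ≤ C - a - X u := by
        rw [hLdef] at h; rw [hCdef]; linarith [hXa, hr0]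
      have hkey : (X u / 2 + δ) * (C - X u) ≤ 2 := by
        nlinarith [mul_nonneg (sub_nonneg.2 hXa) hCaX, mul_nonneg hδ.le h3.le, hδC]
      have h4 : X u / 2 + δ ≤ 2 / (C - X u) := (le_div_iff₀ h2).2 hkey
      linarith
    have hdec := decay X (fun u => X u / 2 - 2 / (lamS u - X u)) s0 a δ hδ
      (fun u hu => hderivX u (lt_of_lt_of_le hs0 hu)) hbnd (hadef.symm.le)
    have hS : s0 ≤ s0 + (a + 1) / δ := by
      have : 0 ≤ (a + 1) / δ := div_nonneg (by linarith) hδ.le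
      linarith
    have h5 := hdec _ hS
    have h6 : δ * ((s0 + (a + 1) / δ) - s0) = a + 1 := by field_simp; ring
    have h7 := hXpos (s0 + (a + 1) / δ) (by linarith)
    linarith
  -- upper bound machinery
  set δ₂ := (M ^ 2 - C * M + 4) / (2 * C) with hδ2def
  clear_value δ₂
  have h2C : (0:ℝ) < 2 * C := by linarith
  have hδ2 : 0 < δ₂ := hδ2def ▸ div_pos hPM h2C
  have hδ2C : δ₂ * (2 * C) = M ^ 2 - C * M + 4 := by
    rw [hδ2def]; field_simp
  have hbndM : ∀ u : ℝ, 0 ≤ u → M ≤ X u → X u / 2 - 2 / (lamS u - X u) ≤ -δ₂ := by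
    intro u hu0 hMX
    have h1 := hD1 u hu0
    have h2 := hCX u hu0
    have h3 := hXpos u hu0
    have hXMC : 0 ≤ X u + M - C := by linarith [hMC2, hMX]
    have hkey : (X u / 2 + δ₂) * (C - X u) ≤ 2 := by
      nlinarith [mul_nonneg (sub_nonneg.2 hMX) hXMC, mul_nonneg hδ2.le h3.le, hδ2C]
    have h4 : X u / 2 + δ₂ ≤ 2 / (C - X u) := (le_div_iff₀ h2).2 hkey
    linarith
  have hA : ∃ s1 : ℝ, 1 ≤ s1 ∧ X s1 ≤ M := by
    by_contra hcon
    push_neg at hcon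
    have hb2 : ∀ u ∈ Set.Ici (1:ℝ), X u / 2 - 2 / (lamS u - X u) ≤ -δ₂ :=
      fun u hu => hbndM u (le_trans zero_le_one hu) (hcon u hu).le
    have hdec := lin_decay X (fun u => X u / 2 - 2 / (lamS u - X u)) 1 δ₂
      (fun u hu => hderivX u (lt_of_lt_of_le one_pos hu)) hb2
    have hS1 : (1:ℝ) ≤ 1 + (X 1 + 1) / δ₂ := by
      have : 0 ≤ (X 1 + 1) / δ₂ :=
        div_nonneg (by linarith [hXpos 1 zero_le_one]) hδ2.le
      linarith
    have h5 := hdec _ hS1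
    have h6 : δ₂ * ((1 + (X 1 + 1) / δ₂) - 1) = X 1 + 1 := by field_simp; ring
    have h7 := hXpos (1 + (X 1 + 1) / δ₂) (by linarith)
    linarith
  obtain ⟨s1, hs11, hs1M⟩ := hA
  have hs1pos : (0:ℝ) < s1 := lt_of_lt_of_le one_pos hs11
  have hupper : ∀ s ∈ Set.Ici s1, X s ≤ M :=
    no_upcross X (fun u => X u / 2 - 2 / (lamS u - X u)) s1 M
      (fun u hu => hderivX u (lt_of_lt_of_le hs1pos hu))
      (fun u hu hXM =>
        lt_of_le_of_lt (hbndM u (le_trans hs1pos.le hu) (le_of_eq hXM.symm))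
          (by linarith))
      hs1M
  refine ⟨s1, fun s hs => ?_⟩
  have hs0 : (0:ℝ) < s := lt_of_lt_of_le hs1pos hs
  have h1 := hlow s hs0
  have h2 := hupper s hs
  rw [hXapp] at h1 h2
  exact ⟨h1, h2⟩
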